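/- Let p ∈ (0,∞), v ∈ S^{n-1}, and let K_t be a parallel chord movement of a convex body K along v. Then for all x', y' ∈ v^⊥, s, t_1, t_2 ∈ R and a, b, c > 0 with 2/a = 1/b + 1/c, one has (c/(b+c)) h_{p,K_{t_1}}(b x' + b s v) + (b/(b+c)) h_{p,K_{t_2}}(c y' + c s v) ≥ h_{p,K_{(t_1+t_2)/2}}( a(x'+y')/2 + a s v ). -/

import Mathlib

open MeasureTheory Real Set
open scoped Pointwise RealInnerProductSpace ENNReal NNReal

noncomputable section

/-- `hp p K y` is the `L_p` support function `(1/p) log ∫_K e^{p⟨x,y⟩} dx/|K|`. -/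
def hp {n : ℕ} (p : ℝ) (K : Set (EuclideanSpace ℝ (Fin n))) (y : EuclideanSpace ℝ (Fin n)) : ℝ :=
  (1 / p) * Real.log ((∫ x in K, Real.exp (p * ⟪x, y⟫)) / (volume K).toReal)

/-- The gauge of the `L_p` polar body. -/
def polarNorm {n : ℕ} (p : ℝ) (K : Set (EuclideanSpace ℝ (Fin n)))
    (y : EuclideanSpace ℝ (Fin n)) : ℝ :=
  ((1 / (Nat.factorial (n - 1) : ℝ)) *
      ∫ r in Set.Ioi (0 : ℝ), r ^ (n - 1) * Real.exp (-(hp p K (r • y)))) ^ (-(1 / (n : ℝ)))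

/-- The `L_p` polar body `K^{o,p}`. -/
def polarBody {n : ℕ} (p : ℝ) (K : Set (EuclideanSpace ℝ (Fin n))) :
    Set (EuclideanSpace ℝ (Fin n)) :=
  {y | polarNorm p K y ≤ 1}

/-- The classical polar body. -/
def polar {n : ℕ} (K : Set (EuclideanSpace ℝ (Fin n))) : Set (EuclideanSpace ℝ (Fin n)) :=
  {y | ∀ x ∈ K, ⟪y, x⟫ ≤ 1}

/-- The parallel chord movement `K_t = {x + β(x|v^⊥) t v : x ∈ K}` of `K` along `v`. -/
def pcm {n : ℕ} (K : Set (EuclideanSpace ℝ (Fin n))) (β : EuclideanSpace ℝ (Fin n) → ℝ)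
    (v : EuclideanSpace ℝ (Fin n)) (t : ℝ) : Set (EuclideanSpace ℝ (Fin n)) :=
  (fun x => x + (β (x - ⟪x, v⟫ • v) * t) • v) '' K

/-- The hslice `{x' ∈ v^⊥ : x' + s v ∈ A}` of a set `A`. -/
def hslice {n : ℕ} (v : EuclideanSpace ℝ (Fin n)) (s : ℝ)
    (A : Set (EuclideanSpace ℝ (Fin n))) : Set (EuclideanSpace ℝ (Fin n)) :=
  {x | ⟪x, v⟫ = 0 ∧ x + s • v ∈ A}

/-- The barycenter of a set. -/
def bar {n : ℕ} (A : Set (EuclideanSpace ℝ (Fin n))) : EuclideanSpace ℝ (Fin n) :=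
  ((volume A).toReal)⁻¹ • ∫ x in A, x



theorem pi_shear {n : ℕ} (i0 : Fin n) (ψ : (Fin n → ℝ) → ℝ) (hψ : Measurable ψ)
    (hinv : ∀ (w : Fin n → ℝ) (c : ℝ), ψ (w + fun j => if j = i0 then c else 0) = ψ w) :
    MeasurePreserving (fun (w : Fin n → ℝ) (j : Fin n) => w j + if j = i0 then ψ w else 0)
      volume volume := by
  classical
  set p : Fin n → Prop := fun i => i ≠ i0 with hp
  let e := MeasurableEquiv.piEquivPiSubtypeProd (fun _ : Fin n => ℝ) p
  have he : MeasurePreserving e volume volume :=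
    volume_preserving_piEquivPiSubtypeProd (fun _ : Fin n => ℝ) p
  let g : ({i // p i} → ℝ) → ({i // ¬ p i} → ℝ) → ({i // ¬ p i} → ℝ) :=
    fun u z => z + fun _ => ψ (e.symm (u, fun _ => 0))
  have hgm : Measurable (Function.uncurry g) := by
    apply Measurable.add measurable_snd
    apply measurable_pi_lambda
    intro j
    exact (hψ.comp (e.symm.measurable.comp
      ((measurable_fst).prodMk measurable_const)))
  have hF : MeasurePreserving (fun q : ({i // p i} → ℝ) × ({i // ¬ p i} → ℝ) =>
      (q.1, g q.1 q.2)) volume volume := by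
    refine MeasurePreserving.skew_product (MeasurePreserving.id _) hgm (ae_of_all _ fun u => ?_)
    exact (measurePreserving_add_right volume _).map_eq
  have key : (fun (w : Fin n → ℝ) (j : Fin n) => w j + if j = i0 then ψ w else 0)
      = e.symm ∘ (fun q => (q.1, g q.1 q.2)) ∘ e := by
    funext w
    have hw0 : w = e.symm ((e w).1, fun _ => 0) + fun j => if j = i0 then w i0 else 0 := by
      funext j
      simp only [e, MeasurableEquiv.piEquivPiSubtypeProd_symm_apply,
        MeasurableEquiv.piEquivPiSubtypeProd_apply, Pi.add_apply]
      by_cases hj : p j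
      · have hj' : j ≠ i0 := hj
        simp only [dif_pos hj, hj', if_false, add_zero]
      · simp only [hp, not_not] at hj
        simp [hj, hp]
    have hψw : ψ (e.symm ((e w).1, fun _ => 0)) = ψ w := by
      conv_rhs => rw [hw0]
      rw [hinv]
    apply_fun e
    simp only [Function.comp_apply, MeasurableEquiv.apply_symm_apply]
    ext j
    · simp only [e, MeasurableEquiv.piEquivPiSubtypeProd_apply]
      have : (j : Fin n) ≠ i0 := j.2
      simp [this]
    · simp only [e, g, MeasurableEquiv.piEquivPiSubtypeProd_apply, Pi.add_apply, hψw]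
      have : (j : Fin n) = i0 := not_not.mp j.2
      rw [this, if_pos rfl]
      congr 1
      exact hψw.symm
  rw [key]
  exact ((MeasurePreserving.symm e he).comp hF).comp he

theorem euclidean_shear {n : ℕ} (hn : n ≠ 0) (v : EuclideanSpace ℝ (Fin n)) (hv : ‖v‖ = 1)
    (φ : EuclideanSpace ℝ (Fin n) → ℝ) (hφ : Measurable φ)
    (hinv : ∀ (x : EuclideanSpace ℝ (Fin n)) (c : ℝ), φ (x + c • v) = φ x) :
    MeasurePreserving (fun x => x + φ x • v) volume volume := by
  classical
  have i0 : Fin n := ⟨0, Nat.pos_of_ne_zero hn⟩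
  have hcard : Module.finrank ℝ (EuclideanSpace ℝ (Fin n)) = Fintype.card (Fin n) := by
    simp [finrank_euclideanSpace]
  have horth : Orthonormal ℝ (Set.restrict ({i0} : Set (Fin n)) (fun _ => v)) := by
    constructor
    · intro i; exact hv
    · intro i j hij
      exact absurd (Subsingleton.elim i j) hij
  obtain ⟨bb, hbb⟩ := horth.exists_orthonormalBasis_extension_of_card_eq hcard
  have hbv : bb i0 = v := hbb i0 rfl
  -- the conjugated map on the pi type
  let eE := (MeasurableEquiv.toLp 2 (Fin n → ℝ)).symm
  have heE : MeasurePreserving eE volume volume :=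
    EuclideanSpace.volume_preserving_symm_measurableEquiv_toLp (Fin n)
  let Φ : EuclideanSpace ℝ (Fin n) → (Fin n → ℝ) := fun x => eE (bb.repr x)
  let Φinv : (Fin n → ℝ) → EuclideanSpace ℝ (Fin n) := fun w => bb.repr.symm (eE.symm w)
  have hΦ : MeasurePreserving Φ volume volume := heE.comp bb.measurePreserving_repr
  have hΦinv : MeasurePreserving Φinv volume volume :=
    bb.measurePreserving_repr_symm.comp (MeasurePreserving.symm eE heE)
  have hΦinvΦ : ∀ x, Φinv (Φ x) = x := by
    intro x; simp [Φ, Φinv]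
  let ψ : (Fin n → ℝ) → ℝ := fun w => φ (Φinv w)
  have hψ : Measurable ψ := hφ.comp hΦinv.measurable
  have hsingle : ∀ c : ℝ, Φinv (fun j => if j = i0 then c else 0) = c • v := by
    intro c
    have : eE.symm (fun j => if j = i0 then c else 0) = c • EuclideanSpace.single i0 1 := by
      ext j
      by_cases hj : j = i0 <;>
        simp [eE, MeasurableEquiv.coe_toLp,
          EuclideanSpace.single_apply, hj]
    simp only [Φinv, this]
    rw [_root_.map_smul]
    rw [bb.repr_symm_single]
    rw [hbv]
  have hinvψ : ∀ (w : Fin n → ℝ) (c : ℝ), ψ (w + fun j => if j = i0 then c else 0) = ψ w := by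
    intro w c
    have : Φinv (w + fun j => if j = i0 then c else 0) = Φinv w + c • v := by
      simp only [Φinv]
      rw [show eE.symm (w + fun j => if j = i0 then c else 0)
          = eE.symm w + eE.symm (fun j => if j = i0 then c else 0) from rfl]
      rw [map_add]
      congr 1
      have := hsingle c
      simpa only [Φinv] using this
    simp only [ψ, this, hinv]
  have key : (fun x => x + φ x • v)
      = Φinv ∘ (fun (w : Fin n → ℝ) (j : Fin n) => w j + if j = i0 then ψ w else 0) ∘ Φ := by
    funext x
    simp only [Function.comp_apply]
    have h1 : (fun j => Φ x j + if j = i0 then ψ (Φ x) else 0)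
        = Φ x + fun j => if j = i0 then ψ (Φ x) else 0 := rfl
    rw [h1]
    have h2 : Φinv (Φ x + fun j => if j = i0 then ψ (Φ x) else 0)
        = Φinv (Φ x) + (ψ (Φ x)) • v := by
      simp only [Φinv]
      rw [show eE.symm (Φ x + fun j => if j = i0 then ψ (Φ x) else 0)
          = eE.symm (Φ x) + eE.symm (fun j => if j = i0 then ψ (Φ x) else 0) from rfl]
      rw [map_add]
      congr 1
      simpa only [Φinv] using hsingle (ψ (Φ x))
    rw [h2, hΦinvΦ]
    congr 2
    simp only [ψ, hΦinvΦ]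
  rw [key]
  exact (hΦinv.comp (pi_shear i0 ψ hψ hinvψ)).comp hΦ

theorem shear_embedding {n : ℕ} (v : EuclideanSpace ℝ (Fin n))
    (φ : EuclideanSpace ℝ (Fin n) → ℝ) (hφc : Continuous φ)
    (hinv : ∀ (x : EuclideanSpace ℝ (Fin n)) (c : ℝ), φ (x + c • v) = φ x) :
    MeasurableEmbedding (fun x => x + φ x • v) := by
  have hli : Function.LeftInverse (fun x : EuclideanSpace ℝ (Fin n) => x - φ x • v)
      (fun x => x + φ x • v) := by
    intro x
    simp only
    rw [hinv x (φ x)]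
    abel
  have hri : Function.RightInverse (fun x : EuclideanSpace ℝ (Fin n) => x - φ x • v)
      (fun x => x + φ x • v) := by
    intro x
    simp only
    have : φ (x - φ x • v) = φ x := by
      rw [show x - φ x • v = x + (-φ x) • v by rw [neg_smul]; abel]
      exact hinv x (-φ x)
    rw [this]
    abel
  exact (Homeomorph.mk ⟨fun x => x + φ x • v, fun x => x - φ x • v, hli, hri⟩
    (continuous_id.add (hφc.smul continuous_const))
    (continuous_id.sub (hφc.smul continuous_const))).measurableEmbedding

theorem shear_image_integral {n : ℕ} {T : EuclideanSpace ℝ (Fin n) → EuclideanSpace ℝ (Fin n)}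
    (hT : MeasurePreserving T volume volume) (hTe : MeasurableEmbedding T)
    (K : Set (EuclideanSpace ℝ (Fin n))) (g : EuclideanSpace ℝ (Fin n) → ℝ) :
    ∫ x in T '' K, g x = ∫ x in K, g (T x) := by
  have h1 : ∫ x in T '' K, g x ∂(Measure.map T volume) = ∫ x in K, g (T x) := by
    rw [hTe.setIntegral_map, hTe.injective.preimage_image]
  rw [← h1, hT.map_eq]

theorem shear_image_volume {n : ℕ} {T : EuclideanSpace ℝ (Fin n) → EuclideanSpace ℝ (Fin n)}
    (hT : MeasurePreserving T volume volume) (hTe : MeasurableEmbedding T)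
    (K : Set (EuclideanSpace ℝ (Fin n))) : volume (T '' K) = volume K := by
  have h1 : (Measure.map T volume) (T '' K) = volume K := by
    rw [hTe.map_apply, hTe.injective.preimage_image]
  rw [← h1, hT.map_eq]

set_option maxHeartbeats 1000000 in
theorem stmt3 {n : ℕ} (p : ℝ) (hp' : 0 < p) (v : EuclideanSpace ℝ (Fin n)) (hv : ‖v‖ = 1)
    (K : Set (EuclideanSpace ℝ (Fin n)))
    (hKcomp : IsCompact K) (hKconv : Convex ℝ K) (hKint : (interior K).Nonempty)
    (β : EuclideanSpace ℝ (Fin n) → ℝ) (hβ : Continuous β)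
    (hconv : ∀ t : ℝ, Convex ℝ (pcm K β v t))
    (x' y' : EuclideanSpace ℝ (Fin n)) (hx' : ⟪x', v⟫ = 0) (hy' : ⟪y', v⟫ = 0)
    (s t₁ t₂ a b c : ℝ) (ha : 0 < a) (hb : 0 < b) (hc : 0 < c)
    (habc : 2 / a = 1 / b + 1 / c) :
    hp p (pcm K β v ((t₁ + t₂) / 2)) (a • ((1 / 2 : ℝ) • (x' + y')) + (a * s) • v) ≤
      (c / (b + c)) * hp p (pcm K β v t₁) (b • x' + (b * s) • v) +
        (b / (b + c)) * hp p (pcm K β v t₂) (c • y' + (c * s) • v) := by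
  classical
  have hn : n ≠ 0 := by
    rintro rfl
    rw [Subsingleton.elim v 0, norm_zero] at hv
    exact one_ne_zero hv.symm
  have hbc : 0 < b + c := by linarith
  set lam1 : ℝ := c / (b + c) with hlam1def
  set lam2 : ℝ := b / (b + c) with hlam2def
  have hlam1 : 0 < lam1 := by positivity
  have hlam2 : 0 < lam2 := by positivity
  have hsum : lam1 + lam2 = 1 := by rw [hlam1def, hlam2def, ← add_div, add_comm c b, div_self hbc.ne']
  have h2bc : 2 * (b * c) = a * (b + c) := by
    field_simp at habc
    nlinarith [habc]
  have hab : lam1 * b = a / 2 := by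
    rw [hlam1def]; field_simp; nlinarith [h2bc]
  have hac : lam2 * c = a / 2 := by
    rw [hlam2def]; field_simp; nlinarith [h2bc]
  have hlam1' : lam1 < 1 := by linarith
  clear_value lam1 lam2
  have hvv : ⟪v, v⟫ = 1 := by
    have h := real_inner_self_eq_norm_mul_norm v
    rw [hv] at h; simpa using h
  set y₁ : EuclideanSpace ℝ (Fin n) := b • x' + (b * s) • v with hy₁def
  set y₂ : EuclideanSpace ℝ (Fin n) := c • y' + (c * s) • v with hy₂def
  set z : EuclideanSpace ℝ (Fin n) := a • ((1 / 2 : ℝ) • (x' + y')) + (a * s) • v with hzdef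
  have hz : z = lam1 • y₁ + lam2 • y₂ := by
    rw [hzdef, hy₁def, hy₂def]
    match_scalars
    · push_cast; linarith [hab]
    · push_cast; linarith [hac]
    · push_cast; linear_combination (-s) * hab + (-s) * hac
  -- the shear maps
  set prj : EuclideanSpace ℝ (Fin n) → EuclideanSpace ℝ (Fin n) :=
    fun x => x - ⟪x, v⟫ • v with hprjdef
  have hprjc : Continuous prj := by
    exact continuous_id.sub ((continuous_id.inner continuous_const : Continuous fun x : EuclideanSpace ℝ (Fin n) => ⟪x, v⟫).smul continuous_const)
  have hprjinv : ∀ (x : EuclideanSpace ℝ (Fin n)) (c' : ℝ), prj (x + c' • v) = prj x := by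
    intro x c'
    rw [hprjdef]
    simp only [inner_add_left, real_inner_smul_left, hvv]
    match_scalars <;> ring
  set T : ℝ → EuclideanSpace ℝ (Fin n) → EuclideanSpace ℝ (Fin n) :=
    fun t x => x + (β (prj x) * t) • v with hTdef
  have hφc : ∀ t, Continuous (fun x => β (prj x) * t) := fun t =>
    (hβ.comp hprjc).mul continuous_const
  have hφinv : ∀ (t : ℝ) (x : EuclideanSpace ℝ (Fin n)) (c' : ℝ),
      β (prj (x + c' • v)) * t = β (prj x) * t := by
    intro t x c'; rw [hprjinv]
  have hTmp : ∀ t, MeasurePreserving (T t) volume volume := fun t =>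
    euclidean_shear hn v hv _ (hφc t).measurable (hφinv t)
  have hTe : ∀ t, MeasurableEmbedding (T t) := fun t =>
    shear_embedding v _ (hφc t) (hφinv t)
  have hpcm : ∀ t, pcm K β v t = T t '' K := fun t => rfl
  have hvolt : ∀ t, volume (pcm K β v t) = volume K := by
    intro t; rw [hpcm t]; exact shear_image_volume (hTmp t) (hTe t) K
  have hI : ∀ (t : ℝ) (y : EuclideanSpace ℝ (Fin n)),
      (∫ x in pcm K β v t, Real.exp (p * ⟪x, y⟫)) = ∫ x in K, Real.exp (p * ⟪T t x, y⟫) := by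
    intro t y
    rw [hpcm t]
    exact shear_image_integral (hTmp t) (hTe t) K _
  -- exponent functions
  set A : EuclideanSpace ℝ (Fin n) → ℝ := fun x => p * ⟪T t₁ x, y₁⟫ with hAdef
  set B : EuclideanSpace ℝ (Fin n) → ℝ := fun x => p * ⟪T t₂ x, y₂⟫ with hBdef
  set C : EuclideanSpace ℝ (Fin n) → ℝ := fun x => p * ⟪T ((t₁ + t₂) / 2) x, z⟫ with hCdef
  have hTy : ∀ (t : ℝ) (x y : EuclideanSpace ℝ (Fin n)),
      ⟪T t x, y⟫ = ⟪x, y⟫ + (β (prj x) * t) * ⟪v, y⟫ := by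
    intro t x y
    rw [hTdef]
    simp only [inner_add_left, real_inner_smul_left]
  have hvx' : ⟪v, x'⟫ = 0 := by rw [real_inner_comm]; exact hx'
  have hvy' : ⟪v, y'⟫ = 0 := by rw [real_inner_comm]; exact hy'
  have hvy₁ : ⟪v, y₁⟫ = b * s := by
    rw [hy₁def]
    simp only [inner_add_right, real_inner_smul_right, hvv, hvx']
    ring
  have hvy₂ : ⟪v, y₂⟫ = c * s := by
    rw [hy₂def]
    simp only [inner_add_right, real_inner_smul_right, hvv, hvy']
    ring
  have hvz : ⟪v, z⟫ = a * s := by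
    rw [hzdef]
    simp only [inner_add_right, real_inner_smul_right, hvv, hvx', hvy']
    ring
  have hkey : ∀ x, C x = lam1 * A x + lam2 * B x := by
    intro x
    rw [hAdef, hBdef, hCdef]
    simp only
    rw [hTy, hTy, hTy, hvy₁, hvy₂, hvz, hz]
    rw [inner_add_right, real_inner_smul_right, real_inner_smul_right]
    linear_combination (-(p * β (prj x) * s * t₁)) * hab + (-(p * β (prj x) * s * t₂)) * hac
  -- integrability and positivity
  have hKne : K.Nonempty := hKint.mono interior_subset
  have hKmeas : MeasurableSet K := hKcomp.measurableSet
  have hVfin : volume K ≠ ⊤ := hKcomp.measure_lt_top.ne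
  have hVpos : 0 < (volume K).toReal := by
    refine ENNReal.toReal_pos ?_ hVfin
    refine (lt_of_lt_of_le ?_ (measure_mono interior_subset)).ne'
    exact isOpen_interior.measure_pos volume hKint
  have hgen : ∀ f : EuclideanSpace ℝ (Fin n) → ℝ, Continuous f →
      IntegrableOn (fun x => Real.exp (f x)) K volume ∧
        0 < ∫ x in K, Real.exp (f x) := by
    intro f hf
    have hef : Continuous fun x => Real.exp (f x) := Real.continuous_exp.comp hf
    have hint : IntegrableOn (fun x => Real.exp (f x)) K volume :=
      hef.continuousOn.integrableOn_compact hKcomp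
    refine ⟨hint, ?_⟩
    obtain ⟨x₀, hx₀K, hx₀'⟩ := hKcomp.exists_isMinOn hKne hf.continuousOn
    have hx₀ : ∀ x ∈ K, f x₀ ≤ f x := fun x hx => hx₀' hx
    have hge : Real.exp (f x₀) * (volume K).toReal ≤ ∫ x in K, Real.exp (f x) :=
      by have := setIntegral_ge_of_const_le_real hKmeas hVfin
           (fun x hx => Real.exp_le_exp.mpr (hx₀ x hx)) hint
         rw [measureReal_def] at this
         exact this
    calc (0 : ℝ) < Real.exp (f x₀) * (volume K).toReal := by positivity
      _ ≤ _ := hge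
  have hAc : Continuous A := by
    rw [hAdef]
    exact continuous_const.mul
      ((continuous_id.add ((hφc t₁).smul continuous_const)).inner continuous_const)
  have hBc : Continuous B := by
    rw [hBdef]
    exact continuous_const.mul
      ((continuous_id.add ((hφc t₂).smul continuous_const)).inner continuous_const)
  have hCc : Continuous C := by
    rw [hCdef]
    exact continuous_const.mul
      ((continuous_id.add ((hφc ((t₁ + t₂) / 2)).smul continuous_const)).inner continuous_const)
  obtain ⟨hAint, hApos⟩ := hgen A hAc
  obtain ⟨hBint, hBpos⟩ := hgen B hBc
  obtain ⟨hCint, hCpos⟩ := hgen C hCc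
  -- Hölder
  haveI : IsFiniteMeasure (volume.restrict K) :=
    ⟨by rw [Measure.restrict_apply_univ]; exact hKcomp.measure_lt_top⟩
  have hpq : Real.HolderConjugate (1 / lam1) (1 / lam2) := by
    refine Real.holderConjugate_iff.mpr ⟨?_, ?_⟩
    · rw [lt_div_iff₀ hlam1]; linarith
    · rw [one_div, inv_inv, one_div, inv_inv]; exact hsum
  have hmemA : MemLp (fun x => Real.exp (lam1 * A x)) (ENNReal.ofReal (1 / lam1))
      (volume.restrict K) := by
    obtain ⟨M, hM⟩ := hKcomp.exists_bound_of_continuousOn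
      ((Real.continuous_exp.comp (continuous_const.mul hAc)).continuousOn)
    refine MemLp.of_bound
      (Real.continuous_exp.comp (continuous_const.mul hAc)).aestronglyMeasurable M ?_
    filter_upwards [ae_restrict_mem hKmeas] with x hx using hM x hx
  have hmemB : MemLp (fun x => Real.exp (lam2 * B x)) (ENNReal.ofReal (1 / lam2))
      (volume.restrict K) := by
    obtain ⟨M, hM⟩ := hKcomp.exists_bound_of_continuousOn
      ((Real.continuous_exp.comp (continuous_const.mul hBc)).continuousOn)
    refine MemLp.of_bound
      (Real.continuous_exp.comp (continuous_const.mul hBc)).aestronglyMeasurable M ?_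
    filter_upwards [ae_restrict_mem hKmeas] with x hx using hM x hx
  have holder := MeasureTheory.integral_mul_le_Lp_mul_Lq_of_nonneg hpq
    (Filter.Eventually.of_forall fun x => (Real.exp_pos _).le)
    (Filter.Eventually.of_forall fun x => (Real.exp_pos _).le) hmemA hmemB
  have hmain : (∫ x in K, Real.exp (C x)) ≤
      (∫ x in K, Real.exp (A x)) ^ lam1 * (∫ x in K, Real.exp (B x)) ^ lam2 := by
    have h1 : (∫ x in K, Real.exp (lam1 * A x) * Real.exp (lam2 * B x))
        = ∫ x in K, Real.exp (C x) := by
      refine integral_congr_ae (Filter.Eventually.of_forall fun x => ?_)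
      have h : Real.exp (lam1 * A x) * Real.exp (lam2 * B x) = Real.exp (C x) := by
        rw [hkey x, Real.exp_add]
      simpa using h
    have h2 : (∫ x in K, Real.exp (lam1 * A x) ^ (1 / lam1))
        = ∫ x in K, Real.exp (A x) := by
      refine integral_congr_ae (Filter.Eventually.of_forall fun x => ?_)
      have h : Real.exp (lam1 * A x) ^ (1 / lam1) = Real.exp (A x) := by
        rw [← Real.exp_mul]
        congr 1
        field_simp
      simpa using h
    have h3 : (∫ x in K, Real.exp (lam2 * B x) ^ (1 / lam2))
        = ∫ x in K, Real.exp (B x) := by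
      refine integral_congr_ae (Filter.Eventually.of_forall fun x => ?_)
      have h : Real.exp (lam2 * B x) ^ (1 / lam2) = Real.exp (B x) := by
        rw [← Real.exp_mul]
        congr 1
        field_simp
      simpa using h
    have h4 : (1 : ℝ) / (1 / lam1) = lam1 := by rw [one_div_one_div]
    have h5 : (1 : ℝ) / (1 / lam2) = lam2 := by rw [one_div_one_div]
    rw [h1, h2, h3, h4, h5] at holder
    exact holder
  -- conclusion
  unfold hp
  rw [hvolt, hvolt, hvolt, hI, hI, hI]
  set V : ℝ := (volume K).toReal
  set IA : ℝ := ∫ x in K, Real.exp (A x) with hIAdef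
  set IB : ℝ := ∫ x in K, Real.exp (B x) with hIBdef
  set IC : ℝ := ∫ x in K, Real.exp (C x) with hICdef
  have hlog : Real.log (IC / V) ≤ lam1 * Real.log (IA / V) + lam2 * Real.log (IB / V) := by
    rw [Real.log_div hCpos.ne' hVpos.ne', Real.log_div hApos.ne' hVpos.ne',
      Real.log_div hBpos.ne' hVpos.ne']
    have hlogC : Real.log IC ≤ lam1 * Real.log IA + lam2 * Real.log IB := by
      calc Real.log IC ≤ Real.log (IA ^ lam1 * IB ^ lam2) := by
            apply Real.log_le_log hCpos hmain
        _ = lam1 * Real.log IA + lam2 * Real.log IB := by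
            rw [Real.log_mul (Real.rpow_pos_of_pos hApos _).ne'
              (Real.rpow_pos_of_pos hBpos _).ne',
              Real.log_rpow hApos, Real.log_rpow hBpos]
    have hring : lam1 * (Real.log IA - Real.log V) + lam2 * (Real.log IB - Real.log V)
        = lam1 * Real.log IA + lam2 * Real.log IB - (lam1 + lam2) * Real.log V := by ring
    rw [hring, hsum, one_mul]
    linarith [hlogC]
  calc (1 / p) * Real.log (IC / V)
      ≤ (1 / p) * (lam1 * Real.log (IA / V) + lam2 * Real.log (IB / V)) := by
        apply mul_le_mul_of_nonneg_left hlog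
        positivity
    _ = lam1 * ((1 / p) * Real.log (IA / V)) + lam2 * ((1 / p) * Real.log (IB / V)) := by
        ring
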